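/- The union over k ≥ 1 of the convex hulls of C_{max,k!}^s(n,m) equals the convex hull of C_max^s(n,m), i.e. ⋃_{k ≥ 1} convexHull ℝ (C_{max,k!}^s(n,m)) = convexHull ℝ (C_max^s(n,m)). -/

import Mathlib

open scoped BigOperators

/-- A correlation with `nA` questions for Alice, `nB` questions for Bob and `m` outcomes. -/
def IsCorrelation {nA nB m : ℕ} (p : Fin nA → Fin nB → Fin m → Fin m → ℝ) : Prop :=
  (∀ x y i j, 0 ≤ p x y i j) ∧ ∀ x y, (∑ i, ∑ j, p x y i j) = 1

/-- A projection-valued measure with `m` outcomes on `ℂ^d`. -/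
def IsPVM {d m : ℕ} (E : Fin m → Matrix (Fin d) (Fin d) ℂ) : Prop :=
  (∀ i, (E i).IsHermitian) ∧ (∀ i, E i * E i = E i) ∧ (∑ i, E i = 1)

/-- The set `C_{max,d}(nA,nB,m)` of maximally entangled correlations in dimension `d`. -/
def CmaxD (nA nB m d : ℕ) : Set (Fin nA → Fin nB → Fin m → Fin m → ℝ) :=
  {p | IsCorrelation p ∧
    ∃ (E : Fin nA → Fin m → Matrix (Fin d) (Fin d) ℂ)
      (F : Fin nB → Fin m → Matrix (Fin d) (Fin d) ℂ),
      (∀ x, IsPVM (E x)) ∧ (∀ y, IsPVM (F y)) ∧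
      ∀ x y i j, (p x y i j : ℂ) = (1 / (d : ℂ)) * (E x i * F y j).trace}

/-- The set `C_max(nA,nB,m)` of maximally entangled correlations. -/
def Cmax (nA nB m : ℕ) : Set (Fin nA → Fin nB → Fin m → Fin m → ℝ) :=
  ⋃ (d : ℕ) (_ : 1 ≤ d), CmaxD nA nB m d

/-- A correlation with the same questions for Alice and Bob is synchronous if
`p x x i j = 0` whenever `i ≠ j`. -/
def Synchronous {n m : ℕ} (p : Fin n → Fin n → Fin m → Fin m → ℝ) : Prop :=
  ∀ x i j, i ≠ j → p x x i j = 0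

/-- The set `C_max^s(n,m)` of synchronous maximally entangled correlations. -/
def CmaxSync (n m : ℕ) : Set (Fin n → Fin n → Fin m → Fin m → ℝ) :=
  {p ∈ Cmax n n m | Synchronous p}

section Aux
open scoped Kronecker
open Matrix
open scoped Kronecker
open Matrix

lemma trace_reindex' {a b : Type*} [Fintype a] [Fintype b] [DecidableEq a] [DecidableEq b]
    (e : a ≃ b) (M : Matrix a a ℂ) : (Matrix.reindex e e M).trace = M.trace := by
  simp [Matrix.trace, Matrix.reindex_apply, Matrix.submatrix_apply, Matrix.diag]
  exact Equiv.sum_comp e.symm (fun i => M i i)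

lemma isHermitian_reindex' {a b : Type*} [DecidableEq a] [DecidableEq b]
    (e : a ≃ b) {M : Matrix a a ℂ} (hM : M.IsHermitian) :
    (Matrix.reindex e e M).IsHermitian := by
  unfold Matrix.IsHermitian at *
  simp [Matrix.reindex_apply, Matrix.conjTranspose_submatrix, hM]

lemma isHermitian_kron_one {d t : ℕ} {A : Matrix (Fin d) (Fin d) ℂ} (hA : A.IsHermitian) :
    (A ⊗ₖ (1 : Matrix (Fin t) (Fin t) ℂ)).IsHermitian := by
  ext ⟨i, j⟩ ⟨k, l⟩
  by_cases h : j = l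
  · simp [Matrix.conjTranspose_apply, Matrix.one_apply, h, hA.apply]
  · simp only [Matrix.conjTranspose_apply, Matrix.kroneckerMap_apply, Matrix.one_apply]
    rw [if_neg h, if_neg (fun h' : l = j => absurd h'.symm h)]
    simp

lemma sum_kron_one {d t m : ℕ} (E : Fin m → Matrix (Fin d) (Fin d) ℂ) :
    ∑ i, (E i ⊗ₖ (1 : Matrix (Fin t) (Fin t) ℂ)) = (∑ i, E i) ⊗ₖ (1 : Matrix (Fin t) (Fin t) ℂ) := by
  ext ⟨a, b⟩ ⟨c, e⟩
  simp [Matrix.sum_apply, Finset.sum_mul]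


lemma isPVM_embed {d t m : ℕ} {E : Fin m → Matrix (Fin d) (Fin d) ℂ} (hE : IsPVM E) :
    IsPVM (fun i => Matrix.reindexAlgEquiv ℂ ℂ finProdFinEquiv
      (E i ⊗ₖ (1 : Matrix (Fin t) (Fin t) ℂ))) := by
  obtain ⟨h1, h2, h3⟩ := hE
  refine ⟨fun i => isHermitian_reindex' _ (isHermitian_kron_one (h1 i)), fun i => ?_, ?_⟩
  · rw [← _root_.map_mul, ← Matrix.mul_kronecker_mul, one_mul, h2 i]
  · rw [← map_sum, sum_kron_one, h3, Matrix.one_kronecker_one, _root_.map_one]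

lemma CmaxD_subset_mul (nA nB m d t : ℕ) (ht : 1 ≤ t) :
    CmaxD nA nB m d ⊆ CmaxD nA nB m (d * t) := by
  rintro p ⟨hp, E, F, hE, hF, htr⟩
  refine ⟨hp,
    fun x i => Matrix.reindexAlgEquiv ℂ ℂ finProdFinEquiv (E x i ⊗ₖ (1 : Matrix (Fin t) (Fin t) ℂ)),
    fun y j => Matrix.reindexAlgEquiv ℂ ℂ finProdFinEquiv (F y j ⊗ₖ (1 : Matrix (Fin t) (Fin t) ℂ)),
    fun x => isPVM_embed (hE x), fun y => isPVM_embed (hF y), fun x y i j => ?_⟩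
  rw [← _root_.map_mul, Matrix.reindexAlgEquiv_apply, trace_reindex', ← Matrix.mul_kronecker_mul,
    one_mul, Matrix.trace_kronecker, Matrix.trace_one, htr x y i j]
  have htc : (t : ℂ) ≠ 0 := by exact_mod_cast Nat.one_le_iff_ne_zero.mp ht
  push_cast
  rcases eq_or_ne (d : ℂ) 0 with hd | hd
  · simp [hd]
  · field_simp
    rw [Fintype.card_fin]

lemma CmaxD_fact_mono (n m : ℕ) {k l : ℕ} (hkl : k ≤ l) :
    CmaxD n n m k.factorial ⊆ CmaxD n n m l.factorial := by
  obtain ⟨t, ht⟩ := Nat.factorial_dvd_factorial hkl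
  have htpos : 1 ≤ t := by
    rcases Nat.eq_zero_or_pos t with h | h
    · subst h; simp at ht; exact absurd ht (Nat.factorial_pos l).ne'
    · exact h
  rw [ht]
  exact CmaxD_subset_mul n n m _ t htpos

end Aux

/-- STATEMENT 10: the union over `k ≥ 1` of the convex hulls of `C_{max,k!}^s(n,m)`
equals the convex hull of `C_max^s(n,m)`. -/
theorem iUnion_convexHull_CmaxD_factorial_sync (n m : ℕ) :
    (⋃ (k : ℕ) (_ : 1 ≤ k),
        convexHull ℝ {p : Fin n → Fin n → Fin m → Fin m → ℝ |
          p ∈ CmaxD n n m (Nat.factorial k) ∧ Synchronous p}) =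
      convexHull ℝ (CmaxSync n m) := by
  apply subset_antisymm
  · refine Set.iUnion₂_subset fun k hk => convexHull_mono ?_
    rintro p ⟨hp, hsync⟩
    exact ⟨Set.mem_iUnion₂.mpr ⟨k.factorial, Nat.one_le_iff_ne_zero.mpr (Nat.factorial_pos k).ne',
      hp⟩, hsync⟩
  · rw [convexHull_eq_union_convexHull_finite_subsets]
    refine Set.iUnion₂_subset fun t ht => ?_
    intro x hx
    have key : ∀ p : (Fin n → Fin n → Fin m → Fin m → ℝ), ∃ k, 1 ≤ k ∧
        (p ∈ (t : Set _) → p ∈ CmaxD n n m k.factorial ∧ Synchronous p) := by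
      intro p
      by_cases hp : p ∈ (t : Set _)
      · obtain ⟨hpm, hpsync⟩ := ht hp
        obtain ⟨d, hd⟩ := Set.mem_iUnion.mp hpm
        obtain ⟨hd1, hpd⟩ := Set.mem_iUnion.mp hd
        obtain ⟨s, hs⟩ := Nat.dvd_factorial hd1 le_rfl
        have hs1 : 1 ≤ s := by
          rcases Nat.eq_zero_or_pos s with h | h
          · subst h; simp at hs; exact absurd hs (Nat.factorial_pos d).ne'
          · exact h
        refine ⟨d, hd1, fun _ => ⟨?_, hpsync⟩⟩
        rw [hs]
        exact CmaxD_subset_mul n n m d s hs1 hpd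
      · exact ⟨1, le_rfl, fun h => absurd h hp⟩
    choose f hf1 hf2 using key
    set K : ℕ := max 1 (t.sup f) with hK
    have hK1 : 1 ≤ K := le_max_left _ _
    have hsub : (t : Set _) ⊆ {p : Fin n → Fin n → Fin m → Fin m → ℝ |
        p ∈ CmaxD n n m (Nat.factorial K) ∧ Synchronous p} := by
      intro p hp
      obtain ⟨hpd, hpsync⟩ := hf2 p hp
      refine ⟨CmaxD_fact_mono n m ?_ hpd, hpsync⟩
      exact le_trans (Finset.le_sup hp) (le_max_right _ _)
    exact Set.mem_iUnion₂.mpr ⟨K, hK1, convexHull_mono hsub hx⟩
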